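/- Let l_1, l_2, l_3, l_4 be the vertices of a regular tetrahedron inscribed in the unit sphere S^2 ⊂ E^3 (four unit vectors with ⟨l_i, l_j⟩ = −1/3 for i ≠ j). If arccos(1/3) ≤ θ ≤ π/2, then the union of the four closed caps C[l_j, θ], j = 1, …, 4, equals the whole sphere S^2. -/

import Mathlib

open Metric Real Set RealInnerProductSpace

/-- The closed spherical cap `C[ξ, θ]` on the unit sphere `S² ⊂ E³` with center `ξ`
and radius `θ`. -/
def closedCap (ξ : EuclideanSpace ℝ (Fin 3)) (θ : ℝ) : Set (EuclideanSpace ℝ (Fin 3)) :=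
  {y ∈ sphere (0 : EuclideanSpace ℝ (Fin 3)) 1 | Real.cos θ ≤ ⟪ξ, y⟫}

set_option maxHeartbeats 1600000 in
/-- Let `l₁, …, l₄` be the vertices of a regular tetrahedron inscribed in the unit
sphere. If `arccos(1/3) ≤ θ ≤ π/2`, then the four closed caps `C[lⱼ, θ]` cover the
whole sphere. -/
theorem caps_cover_sphere
    (l : Fin 4 → EuclideanSpace ℝ (Fin 3))
    (hl : ∀ j, ‖l j‖ = 1)
    (hij : ∀ j k, j ≠ k → ⟪l j, l k⟫ = -(1 / 3))
    (θ : ℝ) (hθ₁ : Real.arccos (1 / 3) ≤ θ) (hθ₂ : θ ≤ Real.pi / 2) :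
    (⋃ j, closedCap (l j) θ) = sphere (0 : EuclideanSpace ℝ (Fin 3)) 1 := by
  apply Set.Subset.antisymm
  · exact Set.iUnion_subset fun j y hy => hy.1
  intro y hy
  have hy1 : ‖y‖ = 1 := by simpa using hy
  have hd : ∀ j, ⟪l j, l j⟫ = 1 := fun j => by
    rw [real_inner_self_eq_norm_mul_norm, hl]; ring
  have hkj : ∀ k j : Fin 4, ⟪l k, l j⟫ = if k = j then 1 else -(1/3) := by
    intro k j
    by_cases h : k = j
    · simp [h, hd, hl]
    · simp [h, hij k j h]
  -- step 1 : the four vectors sum to zero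
  have hsum : l 0 + l 1 + l 2 + l 3 = 0 := by
    have h : ⟪l 0 + l 1 + l 2 + l 3, l 0 + l 1 + l 2 + l 3⟫ = 0 := by
      simp only [inner_add_left, inner_add_right, hkj]
      simp only [show ((0:Fin 4) = 1) = False from by decide, show ((0:Fin 4) = 2) = False from by decide,
        show ((0:Fin 4) = 3) = False from by decide, show ((1:Fin 4) = 0) = False from by decide,
        show ((1:Fin 4) = 2) = False from by decide, show ((1:Fin 4) = 3) = False from by decide,
        show ((2:Fin 4) = 0) = False from by decide, show ((2:Fin 4) = 1) = False from by decide,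
        show ((2:Fin 4) = 3) = False from by decide, show ((3:Fin 4) = 0) = False from by decide,
        show ((3:Fin 4) = 1) = False from by decide, show ((3:Fin 4) = 2) = False from by decide,
        if_false, if_true, eq_self_iff_true]
      norm_num
    exact inner_self_eq_zero.mp h
  set a : Fin 4 → ℝ := fun j => ⟪l j, y⟫ with ha
  have hsa : a 0 + a 1 + a 2 + a 3 = 0 := by
    have h0 : ⟪l 0 + l 1 + l 2 + l 3, y⟫ = 0 := by rw [hsum, inner_zero_left]
    simp only [inner_add_left] at h0
    simpa [ha] using h0
  -- any vector orthogonal to all l j is zero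
  have hperp : ∀ z : EuclideanSpace ℝ (Fin 3), (∀ j, ⟪l j, z⟫ = 0) → z = 0 := by
    intro z hz
    by_contra hne
    have hli : LinearIndependent ℝ ![l 0, l 1, l 2, z] := by
      rw [Fintype.linearIndependent_iff]
      intro g hg
      have hzz : (0:ℝ) < ⟪z, z⟫ := by
        rw [real_inner_self_eq_norm_mul_norm]
        have : ‖z‖ ≠ 0 := fun h => hne (norm_eq_zero.mp h)
        positivity
      have hg' : g 0 • l 0 + g 1 • l 1 + g 2 • l 2 + g 3 • z = 0 := by
        simpa [Fin.sum_univ_four] using hg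
      have key : ∀ w : EuclideanSpace ℝ (Fin 3),
          g 0 * ⟪w, l 0⟫ + g 1 * ⟪w, l 1⟫ + g 2 * ⟪w, l 2⟫ + g 3 * ⟪w, z⟫ = 0 := by
        intro w
        have h := congrArg (fun v => ⟪w, v⟫) hg'
        simp only [inner_add_right, real_inner_smul_right, inner_zero_right] at h
        linarith [h]
      have e0 := key (l 0)
      have e1 := key (l 1)
      have e2 := key (l 2)
      have e3 := key z
      rw [hd 0, hij 0 1 (by decide), hij 0 2 (by decide), hz 0] at e0
      rw [hij 1 0 (by decide), hd 1, hij 1 2 (by decide), hz 1] at e1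
      rw [hij 2 0 (by decide), hij 2 1 (by decide), hd 2, hz 2] at e2
      have hz0 : ∀ j, ⟪z, l j⟫ = 0 := fun j => by
        rw [real_inner_comm]; exact hz j
      rw [hz0 0, hz0 1, hz0 2] at e3
      have hg3 : g 3 = 0 := by
        have h30 : g 3 * ⟪z, z⟫ = 0 := by linarith
        rcases mul_eq_zero.mp h30 with h | h
        · exact h
        · exact absurd h (ne_of_gt hzz)
      have hg0 : g 0 = 0 := by linarith
      have hg1 : g 1 = 0 := by linarith
      have hg2 : g 2 = 0 := by linarith
      intro i
      fin_cases i <;> assumption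
    have hcard := hli.fintype_card_le_finrank
    rw [finrank_euclideanSpace_fin] at hcard
    simp at hcard
  -- tight frame identity
  have hinner : ∀ k, ⟪l k, ∑ j, a j • l j⟫ = (4/3) * a k := by
    intro k
    rw [inner_sum]
    simp_rw [real_inner_smul_right, hkj]
    have hsplit : ∀ j : Fin 4, a j * (if k = j then (1:ℝ) else -(1/3))
        = (4/3) * (if k = j then a j else 0) + (-(1/3)) * a j := by
      intro j; by_cases h : k = j <;> simp [h] <;> ring
    rw [Finset.sum_congr rfl fun j _ => hsplit j, Finset.sum_add_distrib,
      ← Finset.mul_sum, ← Finset.mul_sum, Finset.sum_ite_eq]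
    have : ∑ j, a j = 0 := by rw [Fin.sum_univ_four]; exact hsa
    simp [this]
  have hframe : (∑ j, a j • l j) = (4/3 : ℝ) • y := by
    have hzero := hperp ((∑ j, a j • l j) - (4/3 : ℝ) • y) ?_
    · exact sub_eq_zero.mp hzero
    intro k
    rw [inner_sub_right, real_inner_smul_right, hinner k]
    simp [ha]
  -- sum of squares
  have hS : a 0 * a 0 + a 1 * a 1 + a 2 * a 2 + a 3 * a 3 = 4 / 3 := by
    have h := congrArg (fun v => ⟪v, y⟫) hframe
    have hyy : ⟪y, y⟫ = (1:ℝ) := by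
      rw [real_inner_self_eq_norm_mul_norm, hy1]; ring
    simp only [sum_inner, Fin.sum_univ_four, inner_add_left, real_inner_smul_left, hyy] at h
    simp only [ha] at h ⊢
    linarith [h]
  -- bounds
  have hb : ∀ j, -1 ≤ a j := by
    intro j
    have h1 := abs_real_inner_le_norm (l j) y
    rw [hl j, hy1] at h1
    have h2 := neg_abs_le (⟪l j, y⟫)
    simp only [ha]
    linarith
  -- some a j ≥ 1/3
  have hmax : ∃ j, 1/3 ≤ a j := by
    by_contra h
    push_neg at h
    have p : ∀ j : Fin 4, 0 ≤ (1/3 - a j) * (1 + a j) :=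
      fun j => mul_nonneg (by linarith [h j]) (by linarith [hb j])
    have psum : (1/3 - a 0) * (1 + a 0) + (1/3 - a 1) * (1 + a 1)
        + (1/3 - a 2) * (1 + a 2) + (1/3 - a 3) * (1 + a 3) = 0 := by
      nlinarith [hsa, hS]
    have e0 : (1/3 - a 0) * (1 + a 0) = 0 :=
      le_antisymm (by linarith [p 1, p 2, p 3]) (p 0)
    have e1 : (1/3 - a 1) * (1 + a 1) = 0 :=
      le_antisymm (by linarith [p 0, p 2, p 3]) (p 1)
    have e2 : (1/3 - a 2) * (1 + a 2) = 0 :=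
      le_antisymm (by linarith [p 0, p 1, p 3]) (p 2)
    have e3 : (1/3 - a 3) * (1 + a 3) = 0 :=
      le_antisymm (by linarith [p 0, p 1, p 2]) (p 3)
    have q0 : a 0 = -1 := by
      rcases mul_eq_zero.mp e0 with hh | hh
      · linarith [h 0]
      · linarith
    have q1 : a 1 = -1 := by
      rcases mul_eq_zero.mp e1 with hh | hh
      · linarith [h 1]
      · linarith
    have q2 : a 2 = -1 := by
      rcases mul_eq_zero.mp e2 with hh | hh
      · linarith [h 2]
      · linarith
    have q3 : a 3 = -1 := by
      rcases mul_eq_zero.mp e3 with hh | hh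
      · linarith [h 3]
      · linarith
    linarith
  obtain ⟨j, hj⟩ := hmax
  have hcos : Real.cos θ ≤ 1/3 := by
    have h1 : Real.cos θ ≤ Real.cos (Real.arccos (1/3)) := by
      apply Real.cos_le_cos_of_nonneg_of_le_pi (Real.arccos_nonneg _) _ hθ₁
      linarith [Real.pi_pos]
    rwa [Real.cos_arccos (by norm_num) (by norm_num)] at h1
  exact Set.mem_iUnion.mpr ⟨j, hy, le_trans hcos hj⟩
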